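/- With the block matrix A(ξ0,ξ) as above and ξ0 ≠ 0, a vector (x̄_0, x̄_1, ..., x̄_d) ∈ ℝ^{(d+1)n} lies in the kernel of A(ξ0,ξ) if and only if there exists x ∈ ker B(ξ0,ξ) with x̄_α = ξ_α x for all α = 0,1,...,d (where ξ_0 := ξ0). In particular, for ξ0 ≠ 0, dim ker A(ξ0,ξ) = dim ker B(ξ0,ξ). -/

import Mathlib

open Matrix

/-- The second-order symbol `B(ξ0, ξ) = ξ0² B00 + ξ0 Σ_j ξ_j C^j + Σ_{j,k} ξ_j ξ_k B^{jk}`. -/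
noncomputable def Bsym (n d : ℕ) (B00 : Matrix (Fin n) (Fin n) ℝ)
    (Cc : Fin d → Matrix (Fin n) (Fin n) ℝ)
    (B : Fin d → Fin d → Matrix (Fin n) (Fin n) ℝ)
    (ξ0 : ℝ) (ξ : Fin d → ℝ) : Matrix (Fin n) (Fin n) ℝ :=
  ξ0 ^ 2 • B00 + ξ0 • ∑ j, ξ j • Cc j + ∑ j, ∑ k, (ξ j * ξ k) • B j k

/-- The first-order block symbol `A(ξ0, ξ)`, of size `(d+1)n × (d+1)n`; block index
`Sum.inl ()` is the `P`-block and `Sum.inr i` the `Q_i`-blocks. -/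
noncomputable def Asym (n d : ℕ) (B00 : Matrix (Fin n) (Fin n) ℝ)
    (Cc : Fin d → Matrix (Fin n) (Fin n) ℝ)
    (B : Fin d → Fin d → Matrix (Fin n) (Fin n) ℝ)
    (ξ0 : ℝ) (ξ : Fin d → ℝ) :
    Matrix ((Unit ⊕ Fin d) × Fin n) ((Unit ⊕ Fin d) × Fin n) ℝ :=
  fun p q =>
    match p, q with
    | (Sum.inl _, a), (Sum.inl _, b) => (ξ0 • B00 + ∑ k, ξ k • Cc k) a b
    | (Sum.inl _, a), (Sum.inr j, b) => (∑ k, ξ k • B j k) a b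
    | (Sum.inr i, a), (Sum.inl _, b) => if a = b then -ξ i else 0
    | (Sum.inr i, a), (Sum.inr j, b) => if i = j ∧ a = b then ξ0 else 0

section aux
variable (n d : ℕ) (B00 : Matrix (Fin n) (Fin n) ℝ)
    (Cc : Fin d → Matrix (Fin n) (Fin n) ℝ)
    (B : Fin d → Fin d → Matrix (Fin n) (Fin n) ℝ)
    (ξ0 : ℝ) (ξ : Fin d → ℝ)

lemma rowQ (v : (Unit ⊕ Fin d) × Fin n → ℝ) (i : Fin d) (a : Fin n) :
    (Asym n d B00 Cc B ξ0 ξ).mulVec v (Sum.inr i, a)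
      = -ξ i * v (Sum.inl (), a) + ξ0 * v (Sum.inr i, a) := by
  simp [Asym, mulVec, dotProduct, Fintype.sum_prod_type, Fintype.sum_sum_type,
    ite_and, Finset.sum_ite_eq, Finset.sum_ite_eq']

lemma rowP (v : (Unit ⊕ Fin d) × Fin n → ℝ) (a : Fin n) :
    (Asym n d B00 Cc B ξ0 ξ).mulVec v (Sum.inl (), a)
      = ∑ b, (ξ0 • B00 + ∑ k, ξ k • Cc k) a b * v (Sum.inl (), b)
        + ∑ j, ∑ b, (∑ k, ξ k • B j k) a b * v (Sum.inr j, b) := by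
  simp [Asym, mulVec, dotProduct, Fintype.sum_prod_type, Fintype.sum_sum_type]

lemma keyP (x : Fin n → ℝ) (a : Fin n) :
    (Asym n d B00 Cc B ξ0 ξ).mulVec
        (fun p => Sum.elim (fun _ => ξ0) ξ p.1 * x p.2) (Sum.inl (), a)
      = (Bsym n d B00 Cc B ξ0 ξ).mulVec x a := by
  rw [rowP]
  simp only [Bsym, mulVec, dotProduct, Matrix.add_apply, Matrix.smul_apply,
    Matrix.sum_apply, smul_eq_mul, Sum.elim_inl, Sum.elim_inr,
    Finset.sum_mul, Finset.mul_sum, add_mul, mul_add]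
  rw [Finset.sum_comm (γ := Fin d) (α := Fin n), ← Finset.sum_add_distrib]
  refine Finset.sum_congr rfl fun b _ => ?_
  have h1 : ∑ k, ξ k * Cc k a b * (ξ0 * x b) = ∑ k, ξ0 * (ξ k * Cc k a b) * x b :=
    Finset.sum_congr rfl fun k _ => by ring
  have h2 : ∑ j, ∑ k, ξ k * B j k a b * (ξ j * x b)
      = ∑ j, ∑ k, ξ j * ξ k * B j k a b * x b :=
    Finset.sum_congr rfl fun j _ => Finset.sum_congr rfl fun k _ => by ring
  rw [h1, h2]; ring

lemma main_iff (hξ0 : ξ0 ≠ 0) (v : (Unit ⊕ Fin d) × Fin n → ℝ) :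
    (Asym n d B00 Cc B ξ0 ξ).mulVec v = 0 ↔
      ∃ x : Fin n → ℝ, (Bsym n d B00 Cc B ξ0 ξ).mulVec x = 0 ∧
        (∀ a, v (Sum.inl (), a) = ξ0 * x a) ∧
        (∀ i a, v (Sum.inr i, a) = ξ i * x a) := by
  constructor
  · intro h
    set x : Fin n → ℝ := fun a => ξ0⁻¹ * v (Sum.inl (), a) with hxdef
    have hP : ∀ a, v (Sum.inl (), a) = ξ0 * x a := by
      intro a; simp only [hxdef]; rw [← mul_assoc, mul_inv_cancel₀ hξ0, one_mul]
    have hQ : ∀ i a, v (Sum.inr i, a) = ξ i * x a := by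
      intro i a
      have h0 : -ξ i * v (Sum.inl (), a) + ξ0 * v (Sum.inr i, a) = 0 := by
        rw [← rowQ, h]; rfl
      have : ξ0 * v (Sum.inr i, a) = ξ i * v (Sum.inl (), a) := by linarith
      simp only [hxdef]
      rw [← mul_assoc, mul_comm (ξ i), mul_assoc, ← this, ← mul_assoc, inv_mul_cancel₀ hξ0, one_mul]
    have hv : v = fun p => Sum.elim (fun _ => ξ0) ξ p.1 * x p.2 := by
      funext p
      obtain ⟨s | i, a⟩ := p
      · simpa using hP a
      · simpa using hQ i a
    refine ⟨x, ?_, hP, hQ⟩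
    funext a
    rw [← keyP, ← hv, h]; rfl
  · rintro ⟨x, hx, hP, hQ⟩
    have hv : v = fun p => Sum.elim (fun _ => ξ0) ξ p.1 * x p.2 := by
      funext p
      obtain ⟨s | i, a⟩ := p
      · simpa using hP a
      · simpa using hQ i a
    funext p
    obtain ⟨s | i, a⟩ := p
    · rw [hv, keyP]
      simpa using congrFun hx a
    · rw [rowQ, hP, hQ]
      simp; ring

theorem stmt1' (hξ0 : ξ0 ≠ 0) :
    (∀ v : (Unit ⊕ Fin d) × Fin n → ℝ,
      (Asym n d B00 Cc B ξ0 ξ).mulVec v = 0 ↔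
        ∃ x : Fin n → ℝ, (Bsym n d B00 Cc B ξ0 ξ).mulVec x = 0 ∧
          (∀ a, v (Sum.inl (), a) = ξ0 * x a) ∧
          (∀ i a, v (Sum.inr i, a) = ξ i * x a)) ∧
    Module.finrank ℝ (LinearMap.ker (Asym n d B00 Cc B ξ0 ξ).mulVecLin) =
      Module.finrank ℝ (LinearMap.ker (Bsym n d B00 Cc B ξ0 ξ).mulVecLin) := by
  refine ⟨main_iff n d B00 Cc B ξ0 ξ hξ0, ?_⟩
  set L : (Fin n → ℝ) →ₗ[ℝ] ((Unit ⊕ Fin d) × Fin n → ℝ) :=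
    { toFun := fun x p => Sum.elim (fun _ => ξ0) ξ p.1 * x p.2
      map_add' := by intro x y; funext p; simp [mul_add]
      map_smul' := by intro c x; funext p; simp [smul_eq_mul]; ring } with hL
  have hmem : ∀ x ∈ LinearMap.ker (Bsym n d B00 Cc B ξ0 ξ).mulVecLin,
      L x ∈ LinearMap.ker (Asym n d B00 Cc B ξ0 ξ).mulVecLin := by
    intro x hx
    rw [LinearMap.mem_ker, mulVecLin_apply]
    exact (main_iff n d B00 Cc B ξ0 ξ hξ0 (L x)).2
      ⟨x, by rwa [LinearMap.mem_ker, mulVecLin_apply] at hx,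
        fun a => rfl, fun i a => rfl⟩
  set φ := L.restrict hmem with hφ
  have hbij : Function.Bijective φ := by
    constructor
    · intro x y hxy
      ext a
      have := congrFun (congrArg Subtype.val hxy) (Sum.inl (), a)
      simp only [hφ, LinearMap.restrict_apply, hL, LinearMap.coe_mk, AddHom.coe_mk,
        Sum.elim_inl] at this
      exact mul_left_cancel₀ hξ0 this
    · rintro ⟨v, hv⟩
      rw [LinearMap.mem_ker, mulVecLin_apply] at hv
      obtain ⟨x, hx, hP, hQ⟩ := (main_iff n d B00 Cc B ξ0 ξ hξ0 v).1 hv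
      refine ⟨⟨x, by rw [LinearMap.mem_ker, mulVecLin_apply]; exact hx⟩, ?_⟩
      ext p
      obtain ⟨s | i, a⟩ := p
      · simp [hφ, LinearMap.restrict_apply, hL, (hP a).symm]
      · simp [hφ, LinearMap.restrict_apply, hL, (hQ i a).symm]
  exact ((LinearEquiv.ofBijective φ hbij).finrank_eq).symm

end aux

/-- Lemma 1(ii): for `ξ0 ≠ 0`, the kernel of `A(ξ0,ξ)` consists exactly of the vectors
`(ξ0 x, ξ_1 x, ..., ξ_d x)` with `x ∈ ker B(ξ0,ξ)`; in particular the kernels have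
equal dimension. -/
theorem stmt1 (n d : ℕ) (B00 : Matrix (Fin n) (Fin n) ℝ)
    (Cc : Fin d → Matrix (Fin n) (Fin n) ℝ)
    (B : Fin d → Fin d → Matrix (Fin n) (Fin n) ℝ)
    (ξ0 : ℝ) (hξ0 : ξ0 ≠ 0) (ξ : Fin d → ℝ) :
    (∀ v : (Unit ⊕ Fin d) × Fin n → ℝ,
      (Asym n d B00 Cc B ξ0 ξ).mulVec v = 0 ↔
        ∃ x : Fin n → ℝ, (Bsym n d B00 Cc B ξ0 ξ).mulVec x = 0 ∧
          (∀ a, v (Sum.inl (), a) = ξ0 * x a) ∧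
          (∀ i a, v (Sum.inr i, a) = ξ i * x a)) ∧
    Module.finrank ℝ (LinearMap.ker (Asym n d B00 Cc B ξ0 ξ).mulVecLin) =
      Module.finrank ℝ (LinearMap.ker (Bsym n d B00 Cc B ξ0 ξ).mulVecLin) :=
  stmt1' n d B00 Cc B ξ0 ξ hξ0
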